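/- ∑_{k=1}^∞ (3k − 1)·4^k / (k(2k−1)·C(4k,2k)) = π/2. -/

import Mathlib

open MeasureTheory intervalIntegral Real


lemma beta_nat (a b : ℕ) :
    ∫ t in (0:ℝ)..1, t ^ a * (1 - t) ^ b
      = (a.factorial * b.factorial : ℝ) / (a + b + 1).factorial := by
  have ha : 0 < Complex.re ((a:ℂ) + 1) := by simp; positivity
  have hb : 0 < Complex.re ((b:ℂ) + 1) := by simp; positivity
  have h := Complex.Gamma_mul_Gamma_eq_betaIntegral ha hb
  have g1 : Complex.Gamma ((a:ℂ) + 1) = (a.factorial : ℂ) := Complex.Gamma_nat_eq_factorial a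
  have g2 : Complex.Gamma ((b:ℂ) + 1) = (b.factorial : ℂ) := Complex.Gamma_nat_eq_factorial b
  have g3 : Complex.Gamma ((a:ℂ) + 1 + ((b:ℂ) + 1)) = ((a+b+1).factorial : ℂ) := by
    rw [← Complex.Gamma_nat_eq_factorial (a+b+1)]
    congr 1; push_cast; ring
  have hbi : Complex.betaIntegral ((a:ℂ) + 1) ((b:ℂ) + 1)
      = ((∫ t in (0:ℝ)..1, t ^ a * (1 - t) ^ b : ℝ) : ℂ) := by
    rw [Complex.betaIntegral, ← intervalIntegral.integral_ofReal]
    apply intervalIntegral.integral_congr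
    intro x hx
    simp only [add_sub_cancel_right, Complex.cpow_natCast]
    push_cast
    ring
  rw [g1, g2, g3, hbi] at h
  have hne : ((a+b+1).factorial : ℝ) ≠ 0 := Nat.cast_ne_zero.mpr (Nat.factorial_ne_zero _)
  rw [eq_div_iff hne, mul_comm]
  exact_mod_cast h.symm

lemma g_integral (k : ℕ) :
    ∫ t in (0:ℝ)..1, 2 * (1 - t ^ 2) * (4 * (t * (1 - t)) ^ 2) ^ k
      = (3 * ((k : ℝ) + 1) - 1) * 4 ^ (k + 1) /
        (((k : ℝ) + 1) * (2 * ((k : ℝ) + 1) - 1) *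
          (Nat.choose (4 * (k + 1)) (2 * (k + 1)) : ℝ)) := by
  have key : ∀ t : ℝ, 2 * (1 - t ^ 2) * (4 * (t * (1 - t)) ^ 2) ^ k
      = (2 * 4 ^ k) * (t ^ (2*k) * (1 - t) ^ (2*k))
        - (2 * 4 ^ k) * (t ^ (2*k+2) * (1 - t) ^ (2*k)) := by
    intro t
    rw [mul_pow, ← pow_mul, mul_pow]
    ring
  rw [intervalIntegral.integral_congr (g := fun t : ℝ =>
      (2 * 4 ^ k) * (t ^ (2*k) * (1 - t) ^ (2*k))
        - (2 * 4 ^ k) * (t ^ (2*k+2) * (1 - t) ^ (2*k))) (fun t _ => key t)]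
  rw [intervalIntegral.integral_sub
      (Continuous.intervalIntegrable (by fun_prop) 0 1)
      (Continuous.intervalIntegrable (by fun_prop) 0 1),
    intervalIntegral.integral_const_mul, intervalIntegral.integral_const_mul,
    beta_nat, beta_nat]
  -- now a pure arithmetic identity
  have hc := Nat.choose_mul_factorial_mul_factorial
    (show 2*(k+1) ≤ 4*(k+1) by omega)
  have e1 : 4*(k+1) - 2*(k+1) = 2*(k+1) := by omega
  rw [e1] at hc
  -- factorial expansions
  have f1 : (2*(k+1)).factorial = (2*k+2) * ((2*k+1) * (2*k).factorial) := by
    have : 2*(k+1) = (2*k+1)+1 := by omega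
    rw [this, Nat.factorial_succ, Nat.factorial_succ]
  have f2 : (4*(k+1)).factorial
      = (4*k+4) * ((4*k+3) * ((4*k+2) * (4*k+1).factorial)) := by
    have : 4*(k+1) = ((4*k+2)+1)+1 := by omega
    rw [this, Nat.factorial_succ, Nat.factorial_succ, Nat.factorial_succ]
  have f3 : (2*k+2+(2*k)+1).factorial = (4*k+3)*((4*k+2) * (4*k+1).factorial) := by
    have : 2*k+2+(2*k)+1 = ((4*k+1)+1)+1 := by omega
    rw [this, Nat.factorial_succ, Nat.factorial_succ]
  have f4 : (2*k+(2*k)+1) = 4*k+1 := by omega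
  have f5 : (2*k+2).factorial = (2*k+2) * ((2*k+1) * (2*k).factorial) := by
    rw [Nat.factorial_succ, Nat.factorial_succ]
  rw [f1, f2] at hc
  rw [f3, f4, f5]
  have hC : 0 < Nat.choose (4*(k+1)) (2*(k+1)) := Nat.choose_pos (by omega)
  -- cast hc to ℝ
  have hcR : (Nat.choose (4*(k+1)) (2*(k+1)) : ℝ)
        * ((2*k+2) * ((2*k+1) * ((2*k).factorial : ℝ)))
        * ((2*k+2) * ((2*k+1) * ((2*k).factorial : ℝ)))
      = (4*k+4) * ((4*k+3) * ((4*k+2) * ((4*k+1).factorial : ℝ))) := by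
    exact_mod_cast hc
  have hF : ((2*k).factorial : ℝ) ≠ 0 := Nat.cast_ne_zero.mpr (Nat.factorial_ne_zero _)
  have hF2 : ((4*k+1).factorial : ℝ) ≠ 0 := Nat.cast_ne_zero.mpr (Nat.factorial_ne_zero _)
  have hCR : (Nat.choose (4*(k+1)) (2*(k+1)) : ℝ) ≠ 0 :=
    Nat.cast_ne_zero.mpr hC.ne'
  have h1 : ((k:ℝ) + 1) ≠ 0 := by positivity
  have h2 : (2*((k:ℝ)+1) - 1) ≠ 0 := by nlinarith [Nat.cast_nonneg (α := ℝ) k]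
  push_cast at hcR ⊢
  have hA : ((2:ℝ)*k+2) * ((2*(k:ℝ)+1) * ((2*k).factorial : ℝ)) ≠ 0 := by positivity
  have hCval : (Nat.choose (4 * (k + 1)) (2 * (k + 1)) : ℝ)
      = ((4*(k:ℝ)+4) * ((4*(k:ℝ)+3) * ((4*(k:ℝ)+2) * ((4*k+1).factorial : ℝ))))
        / (((2:ℝ)*k+2) * ((2*(k:ℝ)+1) * ((2*k).factorial : ℝ))
          * (((2:ℝ)*k+2) * ((2*(k:ℝ)+1) * ((2*k).factorial : ℝ)))) := by
    rw [eq_div_iff (mul_ne_zero hA hA)]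
    linear_combination hcR
  rw [hCval]
  have h3 : ((2:ℝ)*(k:ℝ)+1) ≠ 0 := by positivity
  have h4 : ((2:ℝ)*(k:ℝ)+2) ≠ 0 := by positivity
  field_simp
  ring

lemma ftc_integral :
    ∫ t in (0:ℝ)..1, 2 * (1 - t ^ 2) / (1 - 4 * (t * (1 - t)) ^ 2) = Real.pi / 2 := by
  have hq1 : ∀ t : ℝ, 0 < 2*t^2 - 2*t + 1 := by
    intro t; nlinarith [sq_nonneg (2*t - 1)]
  have hq2 : ∀ t ∈ Set.Icc (0:ℝ) 1, 0 < 1 + 2*t - 2*t^2 := by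
    intro t ht; obtain ⟨h0, h1⟩ := ht; nlinarith
  set H : ℝ → ℝ := fun t =>
    (1/4) * Real.log (1 + 2*t - 2*t^2) - (1/4) * Real.log (2*t^2 - 2*t + 1)
      + Real.arctan (2*t - 1) with hH
  have hderiv : ∀ t ∈ Set.uIcc (0:ℝ) 1,
      HasDerivAt H (2 * (1 - t ^ 2) / (1 - 4 * (t * (1 - t)) ^ 2)) t := by
    intro t ht
    rw [Set.uIcc_of_le (by norm_num : (0:ℝ) ≤ 1)] at ht
    have hq1t := hq1 t
    have hq2t := hq2 t ht
    have d2 : HasDerivAt (fun x : ℝ => 1 + 2*x - 2*x^2) (2 - 4*t) t := by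
      have := (((hasDerivAt_id t).const_mul (2:ℝ)).const_add 1).sub
        ((hasDerivAt_pow 2 t).const_mul (2:ℝ))
      exact this.congr_deriv (by ring)
    have d1 : HasDerivAt (fun x : ℝ => 2*x^2 - 2*x + 1) (4*t - 2) t := by
      have := (((hasDerivAt_pow 2 t).const_mul (2:ℝ)).sub
        ((hasDerivAt_id t).const_mul (2:ℝ))).add_const 1
      exact this.congr_deriv (by ring)
    have dlog2 : HasDerivAt (fun x : ℝ => Real.log (1 + 2*x - 2*x^2))
        ((2 - 4*t) / (1 + 2*t - 2*t^2)) t := d2.log hq2t.ne'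
    have dlog1 : HasDerivAt (fun x : ℝ => Real.log (2*x^2 - 2*x + 1))
        ((4*t - 2) / (2*t^2 - 2*t + 1)) t := d1.log hq1t.ne'
    have dinner : HasDerivAt (fun x : ℝ => 2*x - 1) 2 t := by
      have := ((hasDerivAt_id t).const_mul (2:ℝ)).sub_const 1
      exact this.congr_deriv (by ring)
    have datan : HasDerivAt (fun x : ℝ => Real.arctan (2*x - 1))
        (2 / (1 + (2*t - 1)^2)) t := by
      have := (Real.hasDerivAt_arctan (2*t - 1)).comp t dinner
      exact this.congr_deriv (by ring)
    have hsum := ((dlog2.const_mul (1/4:ℝ)).sub (dlog1.const_mul (1/4:ℝ))).add datan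
    refine hsum.congr_deriv ?_
    have h3 : (0:ℝ) < 1 + (2*t - 1)^2 := by positivity
    have hden : (0:ℝ) < 1 - 4 * (t * (1 - t)) ^ 2 := by nlinarith
    rw [mul_div_assoc', mul_div_assoc', div_sub_div _ _ hq2t.ne' hq1t.ne',
      div_add_div _ _ (mul_ne_zero hq2t.ne' hq1t.ne') h3.ne',
      div_eq_div_iff (mul_ne_zero (mul_ne_zero hq2t.ne' hq1t.ne') h3.ne') hden.ne']
    ring
  have hint : IntervalIntegrable
      (fun t : ℝ => 2 * (1 - t ^ 2) / (1 - 4 * (t * (1 - t)) ^ 2)) volume 0 1 := by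
    apply ContinuousOn.intervalIntegrable
    apply ContinuousOn.div
    · fun_prop
    · fun_prop
    · intro t ht
      rw [Set.uIcc_of_le (by norm_num : (0:ℝ) ≤ 1)] at ht
      have := hq1 t
      have := hq2 t ht
      nlinarith
  rw [intervalIntegral.integral_eq_sub_of_hasDerivAt hderiv hint]
  have e1 : H 1 = Real.pi / 4 := by
    simp only [hH]
    norm_num [Real.arctan_one]
  have e0 : H 0 = -(Real.pi / 4) := by
    simp only [hH]
    norm_num [Real.arctan_neg, Real.arctan_one]
  rw [e1, e0]; ring

theorem stmt_18 :
    ∑' k : ℕ, (3 * ((k : ℝ) + 1) - 1) * 4 ^ (k + 1) /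
        (((k : ℝ) + 1) * (2 * ((k : ℝ) + 1) - 1) * (Nat.choose (4 * (k + 1)) (2 * (k + 1)) : ℝ)) =
      Real.pi / 2 := by
  set g : ℕ → ℝ → ℝ := fun k t => 2 * (1 - t ^ 2) * (4 * (t * (1 - t)) ^ 2) ^ k with hg
  have hcont : ∀ k, Continuous (g k) := by intro k; simp only [hg]; fun_prop
  have hmeas : MeasurableSet (Set.Ioc (0:ℝ) 1) := measurableSet_Ioc
  have hbase : ∀ t ∈ Set.Ioc (0:ℝ) 1, 0 ≤ 4 * (t * (1 - t)) ^ 2 ∧ 4 * (t * (1 - t)) ^ 2 ≤ 1/4 := by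
    intro t ht
    obtain ⟨h0, h1⟩ := ht
    have hx0 : 0 ≤ t * (1 - t) := by nlinarith
    have hx4 : t * (1 - t) ≤ 1/4 := by nlinarith [sq_nonneg (t - 1/2)]
    have := mul_self_le_mul_self hx0 hx4
    constructor
    · positivity
    · nlinarith [this]
  have hnonneg : ∀ k, ∀ t ∈ Set.Ioc (0:ℝ) 1, 0 ≤ g k t := by
    intro k t ht
    obtain ⟨h0, h1⟩ := ht
    have : 0 ≤ 1 - t^2 := by nlinarith
    have hb := (hbase t ⟨h0, h1⟩).1
    simp only [hg]
    positivity
  have hbound : ∀ k, ∀ t ∈ Set.Ioc (0:ℝ) 1, ‖g k t‖ ≤ 2 * (1/4)^k := by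
    intro k t ht
    obtain ⟨hb0, hb1⟩ := hbase t ht
    obtain ⟨h0, h1⟩ := ht
    rw [Real.norm_of_nonneg (hnonneg k t ⟨h0, h1⟩)]
    have h2 : (4 * (t * (1 - t)) ^ 2) ^ k ≤ (1/4)^k := pow_le_pow_left₀ hb0 hb1 k
    have h3 : 2 * (1 - t^2) ≤ 2 := by nlinarith
    have h4 : (0:ℝ) ≤ 2 * (1 - t^2) := by nlinarith
    exact mul_le_mul h3 h2 (by positivity) (by norm_num)
  have hint : ∀ k, Integrable (g k) (volume.restrict (Set.Ioc (0:ℝ) 1)) :=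
    fun k => (hcont k).integrableOn_Ioc
  have hsum : Summable fun k => ∫ t in Set.Ioc (0:ℝ) 1, ‖g k t‖ := by
    apply Summable.of_nonneg_of_le
      (fun k => setIntegral_nonneg hmeas (fun t _ => norm_nonneg _))
      (fun k => ?_)
      ((summable_geometric_of_lt_one (by norm_num) (by norm_num : (1/4:ℝ) < 1)).mul_left 2)
    calc (∫ t in Set.Ioc (0:ℝ) 1, ‖g k t‖)
        ≤ ∫ _t in Set.Ioc (0:ℝ) 1, 2 * (1/4:ℝ)^k := by
          apply setIntegral_mono_on ((hint k).norm) (integrableOn_const (by rw [Real.volume_Ioc]; norm_num)) hmeas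
            (hbound k)
      _ = 2 * (1/4:ℝ)^k := by
          rw [setIntegral_const, Real.volume_real_Ioc]
          norm_num
  have step1 : ∀ k : ℕ, (3 * ((k : ℝ) + 1) - 1) * 4 ^ (k + 1) /
        (((k : ℝ) + 1) * (2 * ((k : ℝ) + 1) - 1) * (Nat.choose (4 * (k + 1)) (2 * (k + 1)) : ℝ))
      = ∫ t in Set.Ioc (0:ℝ) 1, g k t := by
    intro k
    rw [← g_integral k, intervalIntegral.integral_of_le (by norm_num : (0:ℝ) ≤ 1)]
  rw [tsum_congr step1]
  rw [MeasureTheory.integral_tsum_of_summable_integral_norm hint hsum]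
  have step2 : ∫ t in Set.Ioc (0:ℝ) 1, (∑' k, g k t)
      = ∫ t in Set.Ioc (0:ℝ) 1, 2 * (1 - t ^ 2) / (1 - 4 * (t * (1 - t)) ^ 2) := by
    apply setIntegral_congr_fun hmeas
    intro t ht
    obtain ⟨hb0, hb1⟩ := hbase t ht
    simp only [hg]
    rw [tsum_mul_left, tsum_geometric_of_lt_one hb0 (by linarith), div_eq_mul_inv]
  rw [step2, ← intervalIntegral.integral_of_le (by norm_num : (0:ℝ) ≤ 1)]
  exact ftc_integral
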